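/- There exists a family R : ℕ → ℕ → ℕ → Prop such that the predicate fun t : ℕ × ℕ × ℕ => R t.1 t.2.1 t.2.2 is computable (ComputablePred), for every n the relation R n is an equivalence relation on ℕ, and yet the infimum relation relating x and y iff R n x y holds for every n (which is an equivalence relation) is not computable: the predicate fun p : ℕ × ℕ => ∀ n, R n p.1 p.2 is not a computable predicate. -/

import Mathlib

open Nat.Partrec Nat.Partrec.Code

private def codeOf (x : ℕ) : Nat.Partrec.Code := Denumerable.ofNat Nat.Partrec.Code x

private def Rfam (n x y : ℕ) : Prop :=
  x = y ∨ (evaln n (codeOf x) 0 = Option.none ∧ evaln n (codeOf y) 0 = Option.none)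

private lemma not_dom_iff (c : Nat.Partrec.Code) :
    (¬ (eval c 0).Dom) ↔ ∀ k, evaln k c 0 = Option.none := by
  rw [Part.dom_iff_mem]
  constructor
  · intro h k
    rw [Option.eq_none_iff_forall_not_mem]
    intro a ha
    exact h ⟨a, evaln_complete.2 ⟨k, ha⟩⟩
  · rintro h ⟨a, ha⟩
    obtain ⟨k, hk⟩ := evaln_complete.1 ha
    simp [h k] at hk

private lemma inf_iff (x y : ℕ) :
    (∀ n, Rfam n x y) ↔ x = y ∨ (¬ (eval (codeOf x) 0).Dom ∧ ¬ (eval (codeOf y) 0).Dom) := by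
  simp only [Rfam, not_dom_iff]
  constructor
  · intro h
    by_cases hxy : x = y
    · exact Or.inl hxy
    · refine Or.inr ⟨fun k => ?_, fun k => ?_⟩ <;> rcases h k with h' | ⟨h1, h2⟩
      · exact absurd h' hxy
      · exact h1
      · exact absurd h' hxy
      · exact h2
  · rintro (h | ⟨h1, h2⟩) n
    · exact Or.inl h
    · exact Or.inr ⟨h1 n, h2 n⟩

theorem computable_family_with_noncomputable_iInf :
    ∃ R : ℕ → ℕ → ℕ → Prop,
      ComputablePred (fun t : ℕ × ℕ × ℕ => R t.1 t.2.1 t.2.2) ∧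
      (∀ n, Equivalence (R n)) ∧
      Equivalence (fun x y : ℕ => ∀ n, R n x y) ∧
      ¬ ComputablePred (fun p : ℕ × ℕ => ∀ n, R n p.1 p.2) := by
  refine ⟨Rfam, ?_, ?_, ?_, ?_⟩
  · -- computability of the family
    rw [ComputablePred.computable_iff]
    refine ⟨fun t => (t.2.1 == t.2.2) ||
        (!(evaln t.1 (codeOf t.2.1) 0).isSome && !(evaln t.1 (codeOf t.2.2) 0).isSome),
      ?_, ?_⟩
    · have h1 : Primrec fun t : ℕ × ℕ × ℕ => evaln t.1 (codeOf t.2.1) 0 :=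
        primrec_evaln.comp <|
          ((Primrec.fst.pair ((Primrec.ofNat _).comp (Primrec.fst.comp Primrec.snd))).pair
            (Primrec.const 0))
      have h2 : Primrec fun t : ℕ × ℕ × ℕ => evaln t.1 (codeOf t.2.2) 0 :=
        primrec_evaln.comp <|
          ((Primrec.fst.pair ((Primrec.ofNat _).comp (Primrec.snd.comp Primrec.snd))).pair
            (Primrec.const 0))
      have heq : Primrec fun t : ℕ × ℕ × ℕ => t.2.1 == t.2.2 :=
        Primrec.beq.comp (Primrec.fst.comp Primrec.snd) (Primrec.snd.comp Primrec.snd)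
      have hn1 : Primrec fun t : ℕ × ℕ × ℕ => !(evaln t.1 (codeOf t.2.1) 0).isSome :=
        Primrec.not.comp (Primrec.option_isSome.comp h1)
      have hn2 : Primrec fun t : ℕ × ℕ × ℕ => !(evaln t.1 (codeOf t.2.2) 0).isSome :=
        Primrec.not.comp (Primrec.option_isSome.comp h2)
      exact (Primrec.or.comp heq (Primrec.and.comp hn1 hn2)).to_comp
    · funext t
      simp [Rfam, Option.isNone_iff_eq_none, Bool.or_eq_true, Bool.and_eq_true, beq_iff_eq]
  · -- each R n is an equivalence
    intro n
    constructor
    · intro x; exact Or.inl rfl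
    · rintro x y (h | ⟨h1, h2⟩)
      · exact Or.inl h.symm
      · exact Or.inr ⟨h2, h1⟩
    · rintro x y z (h | ⟨h1, h2⟩) (h' | ⟨h1', h2'⟩)
      · exact h ▸ (Or.inl h')
      · exact h ▸ (Or.inr ⟨h1', h2'⟩)
      · exact h' ▸ (Or.inr ⟨h1, h2⟩)
      · exact Or.inr ⟨h1, h2'⟩
  · -- the infimum is an equivalence
    constructor
    · intro x n; exact Or.inl rfl
    · intro x y h n
      rcases h n with h' | ⟨h1, h2⟩
      · exact Or.inl h'.symm
      · exact Or.inr ⟨h2, h1⟩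
    · intro x y z h h' n
      rcases h n with h1 | ⟨h1, h2⟩
      · exact h1 ▸ h' n
      · rcases h' n with h1' | ⟨h1', h2'⟩
        · exact h1' ▸ Or.inr ⟨h1, h2⟩
        · exact Or.inr ⟨h1, h2'⟩
  · -- noncomputability
    intro h
    obtain ⟨f, hf, hfeq⟩ := ComputablePred.computable_iff.1 h
    -- reduction map
    set g : Nat.Partrec.Code → ℕ × ℕ := fun c =>
      (Encodable.encode (c.comp Nat.Partrec.Code.id),
       Encodable.encode (c.comp (Nat.Partrec.Code.id.comp Nat.Partrec.Code.id))) with hg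
    have hgc : Computable g := by
      have h1 : Primrec fun c : Nat.Partrec.Code => c.comp Nat.Partrec.Code.id :=
        primrec₂_comp.comp Primrec.id (Primrec.const _)
      have h2 : Primrec fun c : Nat.Partrec.Code =>
          c.comp (Nat.Partrec.Code.id.comp Nat.Partrec.Code.id) :=
        primrec₂_comp.comp Primrec.id (Primrec.const _)
      exact ((Primrec.encode.comp h1).pair (Primrec.encode.comp h2)).to_comp
    have key : ∀ c : Nat.Partrec.Code, (f (g c) = true) ↔ ¬ (eval c 0).Dom := by
      intro c
      have hP : (∀ n, Rfam n (g c).1 (g c).2) ↔ f (g c) = true :=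
        iff_of_eq (congrFun hfeq (g c))
      rw [← hP, inf_iff]
      have hne : (g c).1 ≠ (g c).2 := by
        simp only [hg]
        intro hcontra
        have := Encodable.encode_injective hcontra
        simp only [Nat.Partrec.Code.comp.injEq] at this
        simpa [Nat.Partrec.Code.id] using this.2
      have hco1 : codeOf (g c).1 = c.comp Nat.Partrec.Code.id := by
        simp [hg, codeOf, Denumerable.ofNat_encode]
      have hco2 : codeOf (g c).2 = c.comp (Nat.Partrec.Code.id.comp Nat.Partrec.Code.id) := by
        simp [hg, codeOf, Denumerable.ofNat_encode]
      have he1 : eval (codeOf (g c).1) 0 = eval c 0 := by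
        rw [hco1]; simp [eval, Seq.seq, Nat.pair]; exact Part.bind_some _ _
      have he2 : eval (codeOf (g c).2) 0 = eval c 0 := by
        rw [hco2]; simp [eval, Seq.seq, Nat.pair]
        rw [show Part.some 0 >>= Code.id.eval = Part.some 0 from (Part.bind_some _ _).trans (eval_id 0)]
        exact Part.bind_some _ _
      rw [he1, he2]
      simp [hne]
    have : ComputablePred fun c : Nat.Partrec.Code => ¬ (eval c 0).Dom := by
      rw [ComputablePred.computable_iff]
      exact ⟨fun c => f (g c), hf.comp hgc, by funext c; simp [key c]⟩
    exact ComputablePred.halting_problem_not_re 0 this.to_re
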